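/- Let an admissible chain-partition datum for e_1,…,e_M be given. For each (h,m) ∈ J with (h,m+1) ∈ J and each i ∈ Δ_{h,m}, j ∈ Δ_{h,m+1}, set μ_{ij} = (Σ_{k=l_1(h)}^{m} (ε(h) − k) r_{h,k}) / (r_{h,m} · r_{h,m+1} · ‖e_i‖² · ‖e_j‖²). Then every μ_{ij} ≥ 0, one has β̂ = Σ μ_{ij} (e_i − e_j) (the sum running over all such pairs (i,j)), and Σ μ_{ij} = ‖β̂‖². In particular, if β̂ ≠ 0 then β̂/‖β̂‖² lies in the convex hull of {e_i − e_j : i ∈ Δ_{h,m}, j ∈ Δ_{h,m+1} for some (h,m) ∈ J with (h,m+1) ∈ J}. -/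

import Mathlib

open scoped RealInnerProductSpace BigOperators

/-- A chain-partition datum for the pairwise orthogonal nonzero vectors `e 0, …, e (M-1)`:
a positive integer `L`, functions `l1 l2 : {1,…,L} → ℤ` with `l1 h ≤ l2 h`, and pairwise
disjoint nonempty subsets `Δ h m ⊆ {1,…,M}` for `(h,m)` in the index set
`J = {(h,m) : 1 ≤ h ≤ L, l1 h ≤ m ≤ l2 h}` whose union is `{1,…,M}`. -/
structure ChainPartitionDatum (M : ℕ) (V : Type*) [NormedAddCommGroup V]
    [InnerProductSpace ℝ V] (e : Fin M → V) where
  L : ℕ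
  Lpos : 0 < L
  l1 : Fin L → ℤ
  l2 : Fin L → ℤ
  l1_le_l2 : ∀ h, l1 h ≤ l2 h
  Δ : Fin L → ℤ → Finset (Fin M)
  Δ_nonempty : ∀ h m, l1 h ≤ m → m ≤ l2 h → (Δ h m).Nonempty
  Δ_disjoint : ∀ h m h' m', l1 h ≤ m → m ≤ l2 h → l1 h' ≤ m' → m' ≤ l2 h' →
    (h, m) ≠ (h', m') → Disjoint (Δ h m) (Δ h' m')
  Δ_union : ∀ i : Fin M, ∃ h m, l1 h ≤ m ∧ m ≤ l2 h ∧ i ∈ Δ h m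

namespace ChainPartitionDatum

variable {V : Type*} [NormedAddCommGroup V] [InnerProductSpace ℝ V]
variable {M : ℕ} {e : Fin M → V}

/-- `r h m = Σ_{j ∈ Δ_{h,m}} ‖e_j‖⁻²`. -/
noncomputable def r (D : ChainPartitionDatum M V e) (h : Fin D.L) (m : ℤ) : ℝ :=
  ∑ j ∈ D.Δ h m, (‖e j‖ ^ 2)⁻¹

/-- `ε h = (Σ_{m=l1 h}^{l2 h} m·r_{h,m}) / (Σ_{m=l1 h}^{l2 h} r_{h,m})`. -/
noncomputable def eps (D : ChainPartitionDatum M V e) (h : Fin D.L) : ℝ :=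
  (∑ m ∈ Finset.Icc (D.l1 h) (D.l2 h), (m : ℝ) * D.r h m) /
    ∑ m ∈ Finset.Icc (D.l1 h) (D.l2 h), D.r h m

/-- Admissibility: `−1/2 ≤ ε(h) < 1/2` for all `h` and `ε(1) > ε(2) > … > ε(L)`. -/
def Admissible (D : ChainPartitionDatum M V e) : Prop :=
  (∀ h, -(1 / 2 : ℝ) ≤ D.eps h ∧ D.eps h < 1 / 2) ∧ StrictAnti D.eps

/-- `β̂ = Σ_{h=1}^{L} Σ_{m=l1 h}^{l2 h} Σ_{j ∈ Δ_{h,m}} (ε(h) − m)·e_j/‖e_j‖²`. -/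
noncomputable def betaHat (D : ChainPartitionDatum M V e) : V :=
  ∑ h : Fin D.L, ∑ m ∈ Finset.Icc (D.l1 h) (D.l2 h), ∑ j ∈ D.Δ h m,
    ((D.eps h - (m : ℝ)) / ‖e j‖ ^ 2) • e j

end ChainPartitionDatum

namespace ChainPartitionDatum

variable {V : Type*} [NormedAddCommGroup V] [InnerProductSpace ℝ V]
variable {M : ℕ} {e : Fin M → V}

/-- The coefficient
`μ_{ij} = (Σ_{k=l1(h)}^{m} (ε(h) − k) r_{h,k}) / (r_{h,m} r_{h,m+1} ‖e_i‖² ‖e_j‖²)`. -/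
noncomputable def mu (D : ChainPartitionDatum M V e) (h : Fin D.L) (m : ℤ) (i j : Fin M) :
    ℝ :=
  (∑ k ∈ Finset.Icc (D.l1 h) m, (D.eps h - (k : ℝ)) * D.r h k) /
    (D.r h m * D.r h (m + 1) * ‖e i‖ ^ 2 * ‖e j‖ ^ 2)

end ChainPartitionDatum

namespace CPDAux

variable {W : Type*} [AddCommGroup W] [Module ℝ W]

lemma tele (w : ℤ → W) (a b : ℤ) (hab : a ≤ b) :
    ∑ m ∈ Finset.Icc a (b - 1), (w m - w (m + 1)) = w a - w b := by
  refine Int.le_induction (motive := fun b _ => ∑ m ∈ Finset.Icc a (b - 1), (w m - w (m + 1)) = w a - w b) ?_ ?_ b hab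
  · show ∑ m ∈ Finset.Icc a (a - 1), (w m - w (m + 1)) = w a - w a
    rw [Finset.Icc_eq_empty (by omega)]
    simp
  · intro b hb ih
    show ∑ m ∈ Finset.Icc a (b + 1 - 1), (w m - w (m + 1)) = w a - w (b + 1)
    have h1 : Finset.Icc a (b + 1 - 1) = insert b (Finset.Icc a (b - 1)) := by
      ext x; simp only [Finset.mem_Icc, Finset.mem_insert]; omega
    rw [h1, Finset.sum_insert (by simp only [Finset.mem_Icc]; omega), ih]
    abel

lemma abel_sum (t : ℤ → ℝ) (w : ℤ → W) (a b : ℤ) :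
    ∑ m ∈ Finset.Icc a (b - 1), (∑ k ∈ Finset.Icc a m, t k) • (w m - w (m + 1)) =
      ∑ k ∈ Finset.Icc a b, t k • (w k - w b) := by
  have swap :
      ∑ m ∈ Finset.Icc a (b - 1), ∑ k ∈ Finset.Icc a m, t k • (w m - w (m + 1)) =
        ∑ k ∈ Finset.Icc a (b - 1), ∑ m ∈ Finset.Icc k (b - 1), t k • (w m - w (m + 1)) := by
    apply Finset.sum_comm'
    intro m k
    simp only [Finset.mem_Icc]
    omega
  calc ∑ m ∈ Finset.Icc a (b - 1), (∑ k ∈ Finset.Icc a m, t k) • (w m - w (m + 1))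
      = ∑ m ∈ Finset.Icc a (b - 1), ∑ k ∈ Finset.Icc a m, t k • (w m - w (m + 1)) := by
        simp [Finset.sum_smul]
    _ = ∑ k ∈ Finset.Icc a (b - 1), ∑ m ∈ Finset.Icc k (b - 1), t k • (w m - w (m + 1)) := swap
    _ = ∑ k ∈ Finset.Icc a (b - 1), t k • (w k - w b) := by
        apply Finset.sum_congr rfl
        intro k hk
        simp only [Finset.mem_Icc] at hk
        rw [← Finset.smul_sum, tele w k b (by omega)]
    _ = ∑ k ∈ Finset.Icc a b, t k • (w k - w b) := by
        by_cases hab : a ≤ b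
        · have h1 : Finset.Icc a b = insert b (Finset.Icc a (b - 1)) := by
            ext x; simp only [Finset.mem_Icc, Finset.mem_insert]; omega
          rw [h1, Finset.sum_insert (by simp only [Finset.mem_Icc]; omega)]
          simp
        · rw [Finset.Icc_eq_empty (by omega), Finset.Icc_eq_empty (by omega)]

end CPDAux

namespace ChainPartitionDatum

variable {V : Type*} [NormedAddCommGroup V] [InnerProductSpace ℝ V]
variable {M : ℕ} {e : Fin M → V}

section Aux

variable (D : ChainPartitionDatum M V e)

/-- partial sums `S_{h,m}`. -/
noncomputable def Sfun (h : Fin D.L) (m : ℤ) : ℝ :=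
  ∑ k ∈ Finset.Icc (D.l1 h) m, (D.eps h - (k : ℝ)) * D.r h k

/-- `v_{h,m}`. -/
noncomputable def vfun (h : Fin D.L) (m : ℤ) : V :=
  ∑ j ∈ D.Δ h m, (‖e j‖ ^ 2)⁻¹ • e j

/-- `w_{h,m}`. -/
noncomputable def wfun (h : Fin D.L) (m : ℤ) : V :=
  (D.r h m)⁻¹ • D.vfun h m

variable {D}

lemma r_pos (he : ∀ i, e i ≠ 0) {h : Fin D.L} {m : ℤ}
    (h1 : D.l1 h ≤ m) (h2 : m ≤ D.l2 h) : 0 < D.r h m := by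
  apply Finset.sum_pos
  · intro j _
    exact inv_pos.mpr (pow_pos (norm_pos_iff.mpr (he j)) 2)
  · exact D.Δ_nonempty h m h1 h2

lemma sum_r_pos (he : ∀ i, e i ≠ 0) (h : Fin D.L) :
    0 < ∑ m ∈ Finset.Icc (D.l1 h) (D.l2 h), D.r h m := by
  apply Finset.sum_pos
  · intro m hm
    simp only [Finset.mem_Icc] at hm
    exact r_pos he hm.1 hm.2
  · exact Finset.nonempty_Icc.mpr (D.l1_le_l2 h)

lemma sum_t_zero (he : ∀ i, e i ≠ 0) (h : Fin D.L) :
    ∑ m ∈ Finset.Icc (D.l1 h) (D.l2 h), (D.eps h - (m : ℝ)) * D.r h m = 0 := by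
  have hr := (sum_r_pos he h).ne'
  have : ∑ m ∈ Finset.Icc (D.l1 h) (D.l2 h), (D.eps h - (m : ℝ)) * D.r h m =
      D.eps h * (∑ m ∈ Finset.Icc (D.l1 h) (D.l2 h), D.r h m) -
        ∑ m ∈ Finset.Icc (D.l1 h) (D.l2 h), (m : ℝ) * D.r h m := by
    rw [Finset.mul_sum, ← Finset.sum_sub_distrib]
    apply Finset.sum_congr rfl
    intro m _; ring
  rw [this, eps, div_mul_cancel₀ _ hr, sub_self]

lemma Sfun_l2 (he : ∀ i, e i ≠ 0) (h : Fin D.L) : D.Sfun h (D.l2 h) = 0 :=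
  sum_t_zero he h

lemma Sfun_nonneg (he : ∀ i, e i ≠ 0) {h : Fin D.L} {m : ℤ}
    (h1 : D.l1 h ≤ m) (h2 : m ≤ D.l2 h) : 0 ≤ D.Sfun h m := by
  by_cases hc : (m : ℝ) ≤ D.eps h
  · apply Finset.sum_nonneg
    intro k hk
    simp only [Finset.mem_Icc] at hk
    have hk2 : k ≤ D.l2 h := le_trans hk.2 h2
    have : (k : ℝ) ≤ D.eps h := le_trans (by exact_mod_cast hk.2) hc
    exact mul_nonneg (by linarith) (r_pos he hk.1 hk2).le
  · push_neg at hc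
    have hsplit : Finset.Icc (D.l1 h) (D.l2 h) =
        Finset.Icc (D.l1 h) m ∪ Finset.Icc (m + 1) (D.l2 h) := by
      ext x; simp only [Finset.mem_Icc, Finset.mem_union]; omega
    have hdisj : Disjoint (Finset.Icc (D.l1 h) m) (Finset.Icc (m + 1) (D.l2 h)) := by
      rw [Finset.disjoint_left]
      intro x hx hx'
      simp only [Finset.mem_Icc] at hx hx'
      omega
    have h0 := sum_t_zero he h
    rw [hsplit, Finset.sum_union hdisj] at h0
    have : D.Sfun h m = -∑ k ∈ Finset.Icc (m + 1) (D.l2 h), (D.eps h - (k : ℝ)) * D.r h k := by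
      rw [Sfun]; linarith
    rw [this, neg_nonneg]
    apply Finset.sum_nonpos
    intro k hk
    simp only [Finset.mem_Icc] at hk
    have : D.eps h < (k : ℝ) := lt_of_lt_of_le hc (by exact_mod_cast (by omega : m ≤ k))
    exact mul_nonpos_of_nonpos_of_nonneg (by linarith) (r_pos he (by omega) hk.2).le

lemma mu_eq (h : Fin D.L) (m : ℤ) (i j : Fin M) :
    D.mu h m i j = D.Sfun h m /
      (D.r h m * D.r h (m + 1) * ‖e i‖ ^ 2 * ‖e j‖ ^ 2) := rfl

lemma block_scalar (he : ∀ i, e i ≠ 0) {h : Fin D.L} {m : ℤ}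
    (h1 : D.l1 h ≤ m) (h2 : m + 1 ≤ D.l2 h) :
    ∑ i ∈ D.Δ h m, ∑ j ∈ D.Δ h (m + 1), D.mu h m i j = D.Sfun h m := by
  have hrm := (r_pos (D := D) he h1 (by omega)).ne'
  have hrm1 := (r_pos (D := D) he (by omega : D.l1 h ≤ m + 1) h2).ne'
  have : ∑ i ∈ D.Δ h m, ∑ j ∈ D.Δ h (m + 1), D.mu h m i j =
      ∑ i ∈ D.Δ h m, (D.Sfun h m / (D.r h m * D.r h (m + 1)) * (‖e i‖ ^ 2)⁻¹) *
        ∑ j ∈ D.Δ h (m + 1), (‖e j‖ ^ 2)⁻¹ := by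
    apply Finset.sum_congr rfl
    intro i _
    rw [Finset.mul_sum]
    apply Finset.sum_congr rfl
    intro j _
    rw [mu_eq]
    have hei : (‖e i‖ : ℝ) ^ 2 ≠ 0 := pow_ne_zero _ (norm_ne_zero_iff.mpr (he i))
    have hej : (‖e j‖ : ℝ) ^ 2 ≠ 0 := pow_ne_zero _ (norm_ne_zero_iff.mpr (he j))
    field_simp
    try ring
  rw [this]
  rw [← Finset.sum_mul]
  rw [← Finset.mul_sum]
  show D.Sfun h m / (D.r h m * D.r h (m + 1)) * D.r h m * D.r h (m + 1) = _
  field_simp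

lemma block_vec (he : ∀ i, e i ≠ 0) {h : Fin D.L} {m : ℤ}
    (h1 : D.l1 h ≤ m) (h2 : m + 1 ≤ D.l2 h) :
    ∑ i ∈ D.Δ h m, ∑ j ∈ D.Δ h (m + 1), D.mu h m i j • (e i - e j) =
      D.Sfun h m • (D.wfun h m - D.wfun h (m + 1)) := by
  have hrm := (r_pos (D := D) he h1 (by omega)).ne'
  have hrm1 := (r_pos (D := D) he (by omega : D.l1 h ≤ m + 1) h2).ne'
  set N := D.Sfun h m with hN
  set C := N / (D.r h m * D.r h (m + 1)) with hC
  have hmu : ∀ i j : Fin M, D.mu h m i j = C * (‖e i‖ ^ 2)⁻¹ * (‖e j‖ ^ 2)⁻¹ := by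
    intro i j
    rw [mu_eq, hC]
    have hei : (‖e i‖ : ℝ) ^ 2 ≠ 0 := pow_ne_zero _ (norm_ne_zero_iff.mpr (he i))
    have hej : (‖e j‖ : ℝ) ^ 2 ≠ 0 := pow_ne_zero _ (norm_ne_zero_iff.mpr (he j))
    field_simp
    try ring
  have part1 : ∑ i ∈ D.Δ h m, ∑ j ∈ D.Δ h (m + 1), D.mu h m i j • e i =
      (C * D.r h (m + 1)) • D.vfun h m := by
    rw [vfun, Finset.smul_sum]
    refine Finset.sum_congr rfl fun i _ => ?_
    rw [← Finset.sum_smul, smul_smul]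
    congr 1
    calc ∑ j ∈ D.Δ h (m + 1), D.mu h m i j
        = ∑ j ∈ D.Δ h (m + 1), C * (‖e i‖ ^ 2)⁻¹ * (‖e j‖ ^ 2)⁻¹ :=
          Finset.sum_congr rfl fun j _ => hmu i j
      _ = C * (‖e i‖ ^ 2)⁻¹ * ∑ j ∈ D.Δ h (m + 1), (‖e j‖ ^ 2)⁻¹ := by
          rw [Finset.mul_sum]
      _ = C * D.r h (m + 1) * (‖e i‖ ^ 2)⁻¹ := by rw [r]; ring
  have part2 : ∑ i ∈ D.Δ h m, ∑ j ∈ D.Δ h (m + 1), D.mu h m i j • e j =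
      (C * D.r h m) • D.vfun h (m + 1) := by
    rw [Finset.sum_comm, vfun, Finset.smul_sum]
    refine Finset.sum_congr rfl fun j _ => ?_
    rw [← Finset.sum_smul, smul_smul]
    congr 1
    calc ∑ i ∈ D.Δ h m, D.mu h m i j
        = ∑ i ∈ D.Δ h m, C * (‖e j‖ ^ 2)⁻¹ * (‖e i‖ ^ 2)⁻¹ :=
          Finset.sum_congr rfl fun i _ => by rw [hmu i j]; ring
      _ = C * (‖e j‖ ^ 2)⁻¹ * ∑ i ∈ D.Δ h m, (‖e i‖ ^ 2)⁻¹ := by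
          rw [Finset.mul_sum]
      _ = C * D.r h m * (‖e j‖ ^ 2)⁻¹ := by rw [r]; ring
  calc ∑ i ∈ D.Δ h m, ∑ j ∈ D.Δ h (m + 1), D.mu h m i j • (e i - e j)
      = (∑ i ∈ D.Δ h m, ∑ j ∈ D.Δ h (m + 1), D.mu h m i j • e i) -
        ∑ i ∈ D.Δ h m, ∑ j ∈ D.Δ h (m + 1), D.mu h m i j • e j := by
        simp only [smul_sub, Finset.sum_sub_distrib]
    _ = (C * D.r h (m + 1)) • D.vfun h m - (C * D.r h m) • D.vfun h (m + 1) := by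
        rw [part1, part2]
    _ = N • (D.wfun h m - D.wfun h (m + 1)) := by
        rw [smul_sub, wfun, wfun, smul_smul, smul_smul]
        congr 2
        · rw [hC]; field_simp; try ring
        · rw [hC]; field_simp; try ring

lemma inner_block (he : ∀ i, e i ≠ 0) (h : Fin D.L) {m : ℤ}
    (h1 : D.l1 h ≤ m) (h2 : m ≤ D.l2 h) :
    ∑ j ∈ D.Δ h m, ((D.eps h - (m : ℝ)) / ‖e j‖ ^ 2) • e j =
      ((D.eps h - (m : ℝ)) * D.r h m) • D.wfun h m := by
  have hrm := (r_pos (D := D) he h1 h2).ne'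
  rw [wfun, smul_smul, vfun, Finset.smul_sum]
  apply Finset.sum_congr rfl
  intro j _
  rw [smul_smul]
  congr 1
  field_simp

/-- the per-`h` Abel summation identity for vectors. -/
lemma hpart_vec (he : ∀ i, e i ≠ 0) (h : Fin D.L) :
    ∑ m ∈ Finset.Icc (D.l1 h) (D.l2 h - 1), ∑ i ∈ D.Δ h m, ∑ j ∈ D.Δ h (m + 1),
        D.mu h m i j • (e i - e j) =
      ∑ m ∈ Finset.Icc (D.l1 h) (D.l2 h), ∑ j ∈ D.Δ h m,
        ((D.eps h - (m : ℝ)) / ‖e j‖ ^ 2) • e j := by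
  have step1 : ∑ m ∈ Finset.Icc (D.l1 h) (D.l2 h - 1), ∑ i ∈ D.Δ h m, ∑ j ∈ D.Δ h (m + 1),
      D.mu h m i j • (e i - e j) =
      ∑ m ∈ Finset.Icc (D.l1 h) (D.l2 h - 1),
        (∑ k ∈ Finset.Icc (D.l1 h) m, (D.eps h - (k : ℝ)) * D.r h k) •
          (D.wfun h m - D.wfun h (m + 1)) := by
    apply Finset.sum_congr rfl
    intro m hm
    simp only [Finset.mem_Icc] at hm
    exact block_vec he hm.1 (by omega)
  rw [step1, CPDAux.abel_sum (fun k => (D.eps h - (k : ℝ)) * D.r h k) (D.wfun h)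
    (D.l1 h) (D.l2 h)]
  have step2 : ∑ k ∈ Finset.Icc (D.l1 h) (D.l2 h),
      ((D.eps h - (k : ℝ)) * D.r h k) • (D.wfun h k - D.wfun h (D.l2 h)) =
      ∑ k ∈ Finset.Icc (D.l1 h) (D.l2 h),
        ((D.eps h - (k : ℝ)) * D.r h k) • D.wfun h k -
      (∑ k ∈ Finset.Icc (D.l1 h) (D.l2 h),
        ((D.eps h - (k : ℝ)) * D.r h k)) • D.wfun h (D.l2 h) := by
    rw [Finset.sum_smul, ← Finset.sum_sub_distrib]
    apply Finset.sum_congr rfl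
    intro k _
    rw [smul_sub]
  rw [step2, sum_t_zero he h, zero_smul, sub_zero]
  apply Finset.sum_congr rfl
  intro m hm
  simp only [Finset.mem_Icc] at hm
  exact (inner_block he h hm.1 hm.2).symm

/-- the per-`h` Abel summation identity for scalars. -/
lemma hpart_scalar (he : ∀ i, e i ≠ 0) (h : Fin D.L) :
    ∑ m ∈ Finset.Icc (D.l1 h) (D.l2 h - 1), D.Sfun h m =
      ∑ m ∈ Finset.Icc (D.l1 h) (D.l2 h), (D.eps h - (m : ℝ)) ^ 2 * D.r h m := by
  have habel := CPDAux.abel_sum (W := ℝ) (fun k => (D.eps h - (k : ℝ)) * D.r h k)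
    (fun k => -(k : ℝ)) (D.l1 h) (D.l2 h)
  have lhs_eq : ∑ m ∈ Finset.Icc (D.l1 h) (D.l2 h - 1),
      (∑ k ∈ Finset.Icc (D.l1 h) m, (D.eps h - (k : ℝ)) * D.r h k) •
        (-( m : ℝ) - -((m : ℝ) + 1)) = ∑ m ∈ Finset.Icc (D.l1 h) (D.l2 h - 1), D.Sfun h m := by
    apply Finset.sum_congr rfl
    intro m _
    rw [smul_eq_mul]
    simp only [Sfun]
    ring
  have rhs_eq : ∑ k ∈ Finset.Icc (D.l1 h) (D.l2 h),
      ((D.eps h - (k : ℝ)) * D.r h k) • (-(k : ℝ) - -((D.l2 h : ℝ))) =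
      ∑ m ∈ Finset.Icc (D.l1 h) (D.l2 h), (D.eps h - (m : ℝ)) ^ 2 * D.r h m := by
    have expand : ∀ k : ℤ, ((D.eps h - (k : ℝ)) * D.r h k) • (-(k : ℝ) - -((D.l2 h : ℝ))) =
        (D.eps h - (k : ℝ)) ^ 2 * D.r h k +
          ((D.l2 h : ℝ) - D.eps h) * ((D.eps h - (k : ℝ)) * D.r h k) := by
      intro k; rw [smul_eq_mul]; ring
    rw [Finset.sum_congr rfl (fun k _ => expand k), Finset.sum_add_distrib,
      ← Finset.mul_sum, sum_t_zero he h, mul_zero, add_zero]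
  simp only [Int.cast_add, Int.cast_one] at habel
  calc ∑ m ∈ Finset.Icc (D.l1 h) (D.l2 h - 1), D.Sfun h m
      = ∑ m ∈ Finset.Icc (D.l1 h) (D.l2 h - 1),
        (∑ k ∈ Finset.Icc (D.l1 h) m, (D.eps h - (k : ℝ)) * D.r h k) •
          (-(m : ℝ) - -((m : ℝ) + 1)) := lhs_eq.symm
    _ = ∑ k ∈ Finset.Icc (D.l1 h) (D.l2 h),
        ((D.eps h - (k : ℝ)) * D.r h k) • (-(k : ℝ) - -((D.l2 h : ℝ))) := habel
    _ = _ := rhs_eq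

end Aux

end ChainPartitionDatum

namespace ChainPartitionDatum

variable {V : Type*} [NormedAddCommGroup V] [InnerProductSpace ℝ V]
variable {M : ℕ} {e : Fin M → V}
variable {D : ChainPartitionDatum M V e}

lemma mem_unique {h h' : Fin D.L} {m m' : ℤ} {j : Fin M}
    (h1 : D.l1 h ≤ m) (h2 : m ≤ D.l2 h) (h1' : D.l1 h' ≤ m') (h2' : m' ≤ D.l2 h')
    (hj : j ∈ D.Δ h m) (hj' : j ∈ D.Δ h' m') : (h, m) = (h', m') := by
  by_contra hne
  exact Finset.disjoint_left.mp (D.Δ_disjoint h m h' m' h1 h2 h1' h2' hne) hj hj'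

lemma partition_sum {W : Type*} [AddCommMonoid W] (f : Fin M → W) :
    ∑ h : Fin D.L, ∑ m ∈ Finset.Icc (D.l1 h) (D.l2 h), ∑ j ∈ D.Δ h m, f j =
      ∑ j : Fin M, f j := by
  have step : ∀ (h : Fin D.L) (m : ℤ), ∑ j ∈ D.Δ h m, f j =
      ∑ j : Fin M, if j ∈ D.Δ h m then f j else 0 := by
    intro h m
    rw [Finset.sum_ite_mem, Finset.univ_inter]
  calc ∑ h : Fin D.L, ∑ m ∈ Finset.Icc (D.l1 h) (D.l2 h), ∑ j ∈ D.Δ h m, f j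
      = ∑ h : Fin D.L, ∑ m ∈ Finset.Icc (D.l1 h) (D.l2 h), ∑ j : Fin M,
          if j ∈ D.Δ h m then f j else 0 := by
        exact Finset.sum_congr rfl fun h _ => Finset.sum_congr rfl fun m _ => step h m
    _ = ∑ j : Fin M, ∑ h : Fin D.L, ∑ m ∈ Finset.Icc (D.l1 h) (D.l2 h),
          if j ∈ D.Δ h m then f j else 0 := by
        rw [Finset.sum_comm]
        exact Finset.sum_congr rfl fun j _ => Finset.sum_comm
    _ = ∑ j : Fin M, f j := by
        refine Finset.sum_congr rfl fun j _ => ?_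
        obtain ⟨h₀, m₀, hm1, hm2, hj0⟩ := D.Δ_union j
        rw [Finset.sum_eq_single h₀]
        · rw [Finset.sum_eq_single m₀]
          · rw [if_pos hj0]
          · intro m hm hne
            simp only [Finset.mem_Icc] at hm
            rw [if_neg]
            intro hj
            exact hne (congrArg Prod.snd (mem_unique hm.1 hm.2 hm1 hm2 hj hj0))
          · intro hm0
            exact absurd (Finset.mem_Icc.mpr ⟨hm1, hm2⟩) hm0
        · intro h _ hne
          apply Finset.sum_eq_zero
          intro m hm
          simp only [Finset.mem_Icc] at hm
          rw [if_neg]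
          intro hj
          exact hne (congrArg Prod.fst (mem_unique hm.1 hm.2 hm1 hm2 hj hj0))
        · intro hh; exact absurd (Finset.mem_univ h₀) hh

/-- the coefficient of `e j` in `betaHat`. -/
noncomputable def coef (D : ChainPartitionDatum M V e) (j : Fin M) : ℝ :=
  (D.eps (D.Δ_union j).choose - ((D.Δ_union j).choose_spec.choose : ℝ)) / ‖e j‖ ^ 2

lemma coef_eq {h : Fin D.L} {m : ℤ} (h1 : D.l1 h ≤ m) (h2 : m ≤ D.l2 h)
    {j : Fin M} (hj : j ∈ D.Δ h m) :
    D.coef j = (D.eps h - (m : ℝ)) / ‖e j‖ ^ 2 := by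
  obtain ⟨hm1, hm2, hj0⟩ := (D.Δ_union j).choose_spec.choose_spec
  have := mem_unique hm1 hm2 h1 h2 hj0 hj
  rw [Prod.mk.injEq] at this
  have e1 : D.eps ((D.Δ_union j).choose) = D.eps h := congrArg D.eps this.1
  have e2 : (((D.Δ_union j).choose_spec.choose : ℤ) : ℝ) = (m : ℝ) := by rw [this.2]
  rw [coef, e1, e2]

lemma betaHat_eq_sum_coef : D.betaHat = ∑ j : Fin M, D.coef j • e j := by
  rw [betaHat, ← partition_sum (D := D) (fun j => D.coef j • e j)]
  refine Finset.sum_congr rfl fun h _ => Finset.sum_congr rfl fun m hm =>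
    Finset.sum_congr rfl fun j hj => ?_
  simp only [Finset.mem_Icc] at hm
  rw [coef_eq hm.1 hm.2 hj]

lemma norm_sq_betaHat (he : ∀ i, e i ≠ 0)
    (horth : ∀ i j : Fin M, i ≠ j → ⟪e i, e j⟫ = 0) :
    ‖D.betaHat‖ ^ 2 = ∑ h : Fin D.L, ∑ m ∈ Finset.Icc (D.l1 h) (D.l2 h),
      (D.eps h - (m : ℝ)) ^ 2 * D.r h m := by
  have key : ‖D.betaHat‖ ^ 2 = ∑ j : Fin M, (D.coef j) ^ 2 * ‖e j‖ ^ 2 := by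
    rw [betaHat_eq_sum_coef, ← real_inner_self_eq_norm_sq, sum_inner]
    refine Finset.sum_congr rfl fun i _ => ?_
    rw [inner_sum, Finset.sum_eq_single i]
    · rw [real_inner_smul_left, real_inner_smul_right, real_inner_self_eq_norm_sq]
      ring
    · intro j _ hne
      rw [real_inner_smul_left, real_inner_smul_right, horth i j (Ne.symm hne),
        mul_zero, mul_zero]
    · intro hi; exact absurd (Finset.mem_univ i) hi
  rw [key, ← partition_sum (D := D) (fun j => (D.coef j) ^ 2 * ‖e j‖ ^ 2)]
  refine Finset.sum_congr rfl fun h _ => Finset.sum_congr rfl fun m hm => ?_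
  simp only [Finset.mem_Icc] at hm
  rw [r, Finset.mul_sum]
  refine Finset.sum_congr rfl fun j hj => ?_
  rw [coef_eq hm.1 hm.2 hj]
  have hej : (‖e j‖ : ℝ) ^ 2 ≠ 0 := pow_ne_zero _ (norm_ne_zero_iff.mpr (he j))
  field_simp

end ChainPartitionDatum

/-- For an admissible chain-partition datum: all coefficients `μ_{ij}` are
nonnegative, `β̂ = Σ μ_{ij} (e_i − e_j)` and `Σ μ_{ij} = ‖β̂‖²`; in particular, if `β̂ ≠ 0`
then `β̂/‖β̂‖²` lies in the convex hull of the corresponding differences `e_i − e_j`. -/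
theorem betaHat_eq_sum_mu
    {V : Type*} [NormedAddCommGroup V] [InnerProductSpace ℝ V]
    {M : ℕ} (hM : 0 < M) (e : Fin M → V) (he : ∀ i, e i ≠ 0)
    (horth : ∀ i j : Fin M, i ≠ j → ⟪e i, e j⟫ = 0)
    (D : ChainPartitionDatum M V e) (hD : D.Admissible) :
    (∀ h : Fin D.L, ∀ m ∈ Finset.Icc (D.l1 h) (D.l2 h - 1), ∀ i ∈ D.Δ h m,
        ∀ j ∈ D.Δ h (m + 1), 0 ≤ D.mu h m i j) ∧
      D.betaHat = ∑ h : Fin D.L, ∑ m ∈ Finset.Icc (D.l1 h) (D.l2 h - 1),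
          ∑ i ∈ D.Δ h m, ∑ j ∈ D.Δ h (m + 1), D.mu h m i j • (e i - e j) ∧
      (∑ h : Fin D.L, ∑ m ∈ Finset.Icc (D.l1 h) (D.l2 h - 1),
          ∑ i ∈ D.Δ h m, ∑ j ∈ D.Δ h (m + 1), D.mu h m i j) = ‖D.betaHat‖ ^ 2 ∧
      (D.betaHat ≠ 0 →
        (‖D.betaHat‖ ^ 2)⁻¹ • D.betaHat ∈
          convexHull ℝ {x : V | ∃ (h : Fin D.L) (m : ℤ) (i j : Fin M),
            D.l1 h ≤ m ∧ m + 1 ≤ D.l2 h ∧ i ∈ D.Δ h m ∧ j ∈ D.Δ h (m + 1) ∧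
            x = e i - e j}) := by
  have P1 : ∀ h : Fin D.L, ∀ m ∈ Finset.Icc (D.l1 h) (D.l2 h - 1), ∀ i ∈ D.Δ h m,
      ∀ j ∈ D.Δ h (m + 1), 0 ≤ D.mu h m i j := by
    intro h m hm i _ j _
    simp only [Finset.mem_Icc] at hm
    rw [ChainPartitionDatum.mu_eq]
    apply div_nonneg (ChainPartitionDatum.Sfun_nonneg he hm.1 (by omega))
    have h1 := (ChainPartitionDatum.r_pos (D := D) he hm.1 (by omega : m ≤ D.l2 h)).le
    have h2 := (ChainPartitionDatum.r_pos (D := D) he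
      (by omega : D.l1 h ≤ m + 1) (by omega : m + 1 ≤ D.l2 h)).le
    positivity
  have P2 : D.betaHat = ∑ h : Fin D.L, ∑ m ∈ Finset.Icc (D.l1 h) (D.l2 h - 1),
      ∑ i ∈ D.Δ h m, ∑ j ∈ D.Δ h (m + 1), D.mu h m i j • (e i - e j) := by
    rw [ChainPartitionDatum.betaHat]
    exact Finset.sum_congr rfl fun h _ => (ChainPartitionDatum.hpart_vec he h).symm
  have P3 : (∑ h : Fin D.L, ∑ m ∈ Finset.Icc (D.l1 h) (D.l2 h - 1),
      ∑ i ∈ D.Δ h m, ∑ j ∈ D.Δ h (m + 1), D.mu h m i j) = ‖D.betaHat‖ ^ 2 := by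
    rw [ChainPartitionDatum.norm_sq_betaHat he horth]
    refine Finset.sum_congr rfl fun h _ => ?_
    rw [← ChainPartitionDatum.hpart_scalar he h]
    refine Finset.sum_congr rfl fun m hm => ?_
    simp only [Finset.mem_Icc] at hm
    exact ChainPartitionDatum.block_scalar he hm.1 (by omega)
  refine ⟨P1, P2, P3, fun hne => ?_⟩
  classical
  set T : Finset ((_ : Fin D.L) × (_ : ℤ) × (Fin M × Fin M)) :=
    Finset.univ.sigma fun h => (Finset.Icc (D.l1 h) (D.l2 h - 1)).sigma fun m =>
      D.Δ h m ×ˢ D.Δ h (m + 1) with hT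
  set w : ((_ : Fin D.L) × (_ : ℤ) × (Fin M × Fin M)) → ℝ :=
    fun p => D.mu p.1 p.2.1 p.2.2.1 p.2.2.2 with hw
  set z : ((_ : Fin D.L) × (_ : ℤ) × (Fin M × Fin M)) → V :=
    fun p => e p.2.2.1 - e p.2.2.2 with hz
  have hsum_w : ∑ p ∈ T, w p = ∑ h : Fin D.L, ∑ m ∈ Finset.Icc (D.l1 h) (D.l2 h - 1),
      ∑ i ∈ D.Δ h m, ∑ j ∈ D.Δ h (m + 1), D.mu h m i j := by
    rw [hT, Finset.sum_sigma]
    refine Finset.sum_congr rfl fun h _ => ?_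
    rw [Finset.sum_sigma]
    refine Finset.sum_congr rfl fun m _ => ?_
    rw [Finset.sum_product]
  have hsum_wz : ∑ p ∈ T, w p • z p =
      ∑ h : Fin D.L, ∑ m ∈ Finset.Icc (D.l1 h) (D.l2 h - 1),
        ∑ i ∈ D.Δ h m, ∑ j ∈ D.Δ h (m + 1), D.mu h m i j • (e i - e j) := by
    rw [hT, Finset.sum_sigma]
    refine Finset.sum_congr rfl fun h _ => ?_
    rw [Finset.sum_sigma]
    refine Finset.sum_congr rfl fun m _ => ?_
    rw [Finset.sum_product]
  have hpos : (0 : ℝ) < ∑ p ∈ T, w p := by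
    rw [hsum_w, P3]
    exact pow_pos (norm_pos_iff.mpr hne) 2
  have hmem : T.centerMass w z ∈ convexHull ℝ {x : V | ∃ (h : Fin D.L) (m : ℤ) (i j : Fin M),
      D.l1 h ≤ m ∧ m + 1 ≤ D.l2 h ∧ i ∈ D.Δ h m ∧ j ∈ D.Δ h (m + 1) ∧ x = e i - e j} := by
    apply Finset.centerMass_mem_convexHull
    · intro p hp
      rw [hT, Finset.mem_sigma] at hp
      obtain ⟨-, hp⟩ := hp
      rw [Finset.mem_sigma] at hp
      obtain ⟨hm, hp⟩ := hp
      rw [Finset.mem_product] at hp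
      exact P1 p.1 p.2.1 hm p.2.2.1 hp.1 p.2.2.2 hp.2
    · exact hpos
    · intro p hp
      rw [hT, Finset.mem_sigma] at hp
      obtain ⟨-, hp⟩ := hp
      rw [Finset.mem_sigma] at hp
      obtain ⟨hm, hp⟩ := hp
      rw [Finset.mem_product] at hp
      simp only [Finset.mem_Icc] at hm
      exact ⟨p.1, p.2.1, p.2.2.1, p.2.2.2, hm.1, by omega, hp.1, hp.2, rfl⟩
  have hcm : T.centerMass w z = (‖D.betaHat‖ ^ 2)⁻¹ • D.betaHat := by
    rw [Finset.centerMass, hsum_w, P3, hsum_wz, ← P2]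
  rwa [hcm] at hmem
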